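/- The unitary U_d satisfies (⟨0|⊗⟨0|⊗⟨0|⊗I_N) U_d (|0⟩⊗|0⟩⊗|0⟩⊗e_0) = (1/4)(−2 e_0 + e_1). -/

import Mathlib

open Matrix
open scoped Kronecker

noncomputable section

instance instNeZeroPow2 (n : ℕ) : NeZero (2 ^ n) := ⟨pow_ne_zero n two_ne_zero⟩

/-- Cyclic left shift: `Sm • e_j = e_{j-1 mod N}`, i.e. `(Sm)_{i j} = [i = j - 1]`. -/
def Sm (N : ℕ) [NeZero N] : Matrix (Fin N) (Fin N) ℂ :=
  Matrix.of fun i j => if i = j - 1 then 1 else 0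

/-- Cyclic right shift: `Sp • e_j = e_{j+1 mod N}`. -/
def Sp (N : ℕ) [NeZero N] : Matrix (Fin N) (Fin N) ℂ :=
  Matrix.of fun i j => if i = j + 1 then 1 else 0

/-- The index `N - 1` of the last grid point. -/
def fLast (N : ℕ) [NeZero N] : Fin N := ⟨N - 1, Nat.sub_lt (Nat.pos_of_neZero N) Nat.one_pos⟩

def Hgate : Matrix (Fin 2) (Fin 2) ℂ := ((1 / Real.sqrt 2 : ℝ) : ℂ) • !![1, 1; 1, -1]
def Zgate : Matrix (Fin 2) (Fin 2) ℂ := !![1, 0; 0, -1]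
def Xgate : Matrix (Fin 2) (Fin 2) ℂ := !![0, 1; 1, 0]
def P0 : Matrix (Fin 2) (Fin 2) ℂ := !![1, 0; 0, 0]
def P1 : Matrix (Fin 2) (Fin 2) ℂ := !![0, 0; 0, 1]

/-- Controlled flip `F(Q) = X ⊗ Q + I₂ ⊗ (I − Q)` for a projector `Q`. -/
def Fctrl {α : Type*} [DecidableEq α] [Fintype α] (Q : Matrix α α ℂ) :
    Matrix (Fin 2 × α) (Fin 2 × α) ℂ :=
  Xgate ⊗ₖ Q + (1 : Matrix (Fin 2) (Fin 2) ℂ) ⊗ₖ ((1 : Matrix α α ℂ) - Q)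

/-- `C₋ = I₂ ⊗ (|0⟩⟨0| ⊗ I₂ ⊗ S⁻ + |1⟩⟨1| ⊗ I₂ ⊗ I_N)` on `del, ℓ₁, ℓ₀, j`. -/
def Cminus3 (N : ℕ) [NeZero N] :
    Matrix (Fin 2 × Fin 2 × Fin 2 × Fin N) (Fin 2 × Fin 2 × Fin 2 × Fin N) ℂ :=
  (1 : Matrix (Fin 2) (Fin 2) ℂ) ⊗ₖ
    (P0 ⊗ₖ ((1 : Matrix (Fin 2) (Fin 2) ℂ) ⊗ₖ Sm N) +
     P1 ⊗ₖ ((1 : Matrix (Fin 2) (Fin 2) ℂ) ⊗ₖ (1 : Matrix (Fin N) (Fin N) ℂ)))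

/-- `C₊ = I₂ ⊗ I₂ ⊗ (|1⟩⟨1| ⊗ S⁺ + |0⟩⟨0| ⊗ I_N)` on `del, ℓ₁, ℓ₀, j`. -/
def Cplus3 (N : ℕ) [NeZero N] :
    Matrix (Fin 2 × Fin 2 × Fin 2 × Fin N) (Fin 2 × Fin 2 × Fin 2 × Fin N) ℂ :=
  (1 : Matrix (Fin 2) (Fin 2) ℂ) ⊗ₖ ((1 : Matrix (Fin 2) (Fin 2) ℂ) ⊗ₖ
    (P1 ⊗ₖ Sp N + P0 ⊗ₖ (1 : Matrix (Fin N) (Fin N) ℂ)))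

/-- `B₀ = F(|0⟩⟨0| ⊗ |0⟩⟨0| ⊗ e₀e₀ᵀ)`. -/
def B00 (N : ℕ) [NeZero N] :
    Matrix (Fin 2 × Fin 2 × Fin 2 × Fin N) (Fin 2 × Fin 2 × Fin 2 × Fin N) ℂ :=
  Fctrl (P0 ⊗ₖ (P0 ⊗ₖ Matrix.single (0 : Fin N) (0 : Fin N) (1 : ℂ)))

/-- `B₂ = F(|0⟩⟨0| ⊗ |1⟩⟨1| ⊗ e₀e₀ᵀ)`. -/
def B01 (N : ℕ) [NeZero N] :
    Matrix (Fin 2 × Fin 2 × Fin 2 × Fin N) (Fin 2 × Fin 2 × Fin 2 × Fin N) ℂ :=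
  Fctrl (P0 ⊗ₖ (P1 ⊗ₖ Matrix.single (0 : Fin N) (0 : Fin N) (1 : ℂ)))

/-- `B_{N−1} = F(|1⟩⟨1| ⊗ |1⟩⟨1| ⊗ e_{N−1}e_{N−1}ᵀ)`. -/
def B11L (N : ℕ) [NeZero N] :
    Matrix (Fin 2 × Fin 2 × Fin 2 × Fin N) (Fin 2 × Fin 2 × Fin 2 × Fin N) ℂ :=
  Fctrl (P1 ⊗ₖ (P1 ⊗ₖ Matrix.single (fLast N) (fLast N) (1 : ℂ)))

/-- `B₄ = F(|0⟩⟨0| ⊗ |1⟩⟨1| ⊗ e_{N−1}e_{N−1}ᵀ)`. -/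
def B01L (N : ℕ) [NeZero N] :
    Matrix (Fin 2 × Fin 2 × Fin 2 × Fin N) (Fin 2 × Fin 2 × Fin 2 × Fin N) ℂ :=
  Fctrl (P0 ⊗ₖ (P1 ⊗ₖ Matrix.single (fLast N) (fLast N) (1 : ℂ)))

/-- `I₂ ⊗ A ⊗ A ⊗ I_N` for a single-qubit gate `A`. -/
def sandwich (N : ℕ) [NeZero N] (A : Matrix (Fin 2) (Fin 2) ℂ) :
    Matrix (Fin 2 × Fin 2 × Fin 2 × Fin N) (Fin 2 × Fin 2 × Fin 2 × Fin N) ℂ :=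
  (1 : Matrix (Fin 2) (Fin 2) ℂ) ⊗ₖ (A ⊗ₖ (A ⊗ₖ (1 : Matrix (Fin N) (Fin N) ℂ)))

/-- `U_d = (I₂⊗H⊗H⊗I) · C₊ · C₋ · B_{N−1} · B₀ · (I₂⊗Z⊗Z⊗I) · (I₂⊗H⊗H⊗I)`. -/
def Ud (N : ℕ) [NeZero N] :
    Matrix (Fin 2 × Fin 2 × Fin 2 × Fin N) (Fin 2 × Fin 2 × Fin 2 × Fin N) ℂ :=
  sandwich N Hgate * Cplus3 N * Cminus3 N * B11L N * B00 N * sandwich N Zgate * sandwich N Hgate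

/-- `U_n = (I₂⊗H⊗H⊗I) · C₊ · C₋ · B₄ · B₃ · B₂ · B₁ · (I₂⊗Z⊗Z⊗I) · (I₂⊗H⊗H⊗I)`. -/
def Un (N : ℕ) [NeZero N] :
    Matrix (Fin 2 × Fin 2 × Fin 2 × Fin N) (Fin 2 × Fin 2 × Fin 2 × Fin N) ℂ :=
  sandwich N Hgate * Cplus3 N * Cminus3 N * B01L N * B11L N * B01 N * B00 N *
    sandwich N Zgate * sandwich N Hgate

/-- The standard basis vector `e_i` of `ℂ^N`. -/
def eVec (N : ℕ) (i : Fin N) : Fin N → ℂ := Pi.single i 1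

set_option maxHeartbeats 1000000 in
theorem ud_aux (N : ℕ) [NeZero N] (hN : 1 < N) :
    (fun i : Fin N =>
        Ud N ((0 : Fin 2), (0 : Fin 2), (0 : Fin 2), i)
          ((0 : Fin 2), (0 : Fin 2), (0 : Fin 2), (0 : Fin N)))
      = (1 / 4 : ℂ) • (-(2 : ℂ) • eVec N 0 + eVec N ((0 : Fin N) + 1)) := by
  have hL0 : fLast N ≠ (0 : Fin N) := by
    intro h
    rw [Fin.ext_iff] at h
    simp only [fLast, Fin.val_zero] at h
    omega
  set c : ℂ := ((1 / Real.sqrt 2 : ℝ) : ℂ) with hcdef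
  have hc : c * c = 1 / 2 := by
    rw [hcdef, ← Complex.ofReal_mul]
    have : Real.sqrt 2 * Real.sqrt 2 = 2 := Real.mul_self_sqrt (by norm_num)
    rw [div_mul_div_comm, one_mul, this]
    norm_num
  have h1 : sandwich N Hgate *ᵥ Pi.single ((0:Fin 2),(0:Fin 2),(0:Fin 2),(0:Fin N)) (1:ℂ)
      = (c * c) • (Pi.single (0,0,0,(0:Fin N)) 1 + Pi.single (0,0,1,(0:Fin N)) 1
          + Pi.single (0,1,0,(0:Fin N)) 1 + Pi.single (0,1,1,(0:Fin N)) 1) := by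
    funext x; obtain ⟨d,a,b,j⟩ := x
    fin_cases d <;> fin_cases a <;> fin_cases b <;>
      simp [sandwich, Hgate, Matrix.one_apply, Pi.single_apply, Prod.ext_iff, hcdef] <;>
      (try (split_ifs <;> (try ring) <;> simp_all))
  have h2 : sandwich N Zgate *ᵥ
        ((c * c) • (Pi.single ((0:Fin 2),(0:Fin 2),(0:Fin 2),(0:Fin N)) (1:ℂ)
          + Pi.single (0,0,1,(0:Fin N)) 1
          + Pi.single (0,1,0,(0:Fin N)) 1 + Pi.single (0,1,1,(0:Fin N)) 1))
      = (c * c) • (Pi.single (0,0,0,(0:Fin N)) 1 - Pi.single (0,0,1,(0:Fin N)) 1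
          - Pi.single (0,1,0,(0:Fin N)) 1 + Pi.single (0,1,1,(0:Fin N)) 1) := by
    rw [mulVec_smul]
    congr 1
    funext x; obtain ⟨d,a,b,j⟩ := x
    fin_cases d <;> fin_cases a <;> fin_cases b <;>
      simp [sandwich, Zgate, Matrix.one_apply, Pi.single_apply, Prod.ext_iff, mulVec_add] <;>
      (try (split_ifs <;> (try ring) <;> simp_all))
  have h3 : B00 N *ᵥ
        ((c * c) • (Pi.single ((0:Fin 2),(0:Fin 2),(0:Fin 2),(0:Fin N)) (1:ℂ)
          - Pi.single (0,0,1,(0:Fin N)) 1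
          - Pi.single (0,1,0,(0:Fin N)) 1 + Pi.single (0,1,1,(0:Fin N)) 1))
      = (c * c) • (Pi.single (1,0,0,(0:Fin N)) 1 - Pi.single (0,0,1,(0:Fin N)) 1
          - Pi.single (0,1,0,(0:Fin N)) 1 + Pi.single (0,1,1,(0:Fin N)) 1) := by
    rw [mulVec_smul]
    congr 1
    funext x; obtain ⟨d,a,b,j⟩ := x
    fin_cases d <;> fin_cases a <;> fin_cases b <;>
      simp [B00, Fctrl, Xgate, P0, Matrix.one_apply, Pi.single_apply, Prod.ext_iff,
        mulVec_add, mulVec_sub, Matrix.single, Matrix.sub_apply, Matrix.add_apply]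
      <;> (try (split_ifs <;> (try ring) <;> simp_all))
  have h4 : B11L N *ᵥ
        ((c * c) • (Pi.single ((1:Fin 2),(0:Fin 2),(0:Fin 2),(0:Fin N)) (1:ℂ)
          - Pi.single (0,0,1,(0:Fin N)) 1
          - Pi.single (0,1,0,(0:Fin N)) 1 + Pi.single (0,1,1,(0:Fin N)) 1))
      = (c * c) • (Pi.single (1,0,0,(0:Fin N)) 1 - Pi.single (0,0,1,(0:Fin N)) 1
          - Pi.single (0,1,0,(0:Fin N)) 1 + Pi.single (0,1,1,(0:Fin N)) 1) := by
    rw [mulVec_smul]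
    congr 1
    funext x; obtain ⟨d,a,b,j⟩ := x
    fin_cases d <;> fin_cases a <;> fin_cases b <;>
      simp [B11L, Fctrl, Xgate, P1, Matrix.one_apply, Pi.single_apply, Prod.ext_iff,
        mulVec_add, mulVec_sub, Matrix.single, Matrix.sub_apply, Matrix.add_apply, hL0] <;>
      (try (split_ifs <;> (try ring) <;> simp_all))
  have h5 : Cminus3 N *ᵥ
        ((c * c) • (Pi.single ((1:Fin 2),(0:Fin 2),(0:Fin 2),(0:Fin N)) (1:ℂ)
          - Pi.single (0,0,1,(0:Fin N)) 1
          - Pi.single (0,1,0,(0:Fin N)) 1 + Pi.single (0,1,1,(0:Fin N)) 1))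
      = (c * c) • (Pi.single (1,0,0,(0:Fin N) - 1) 1 - Pi.single (0,0,1,(0:Fin N) - 1) 1
          - Pi.single (0,1,0,(0:Fin N)) 1 + Pi.single (0,1,1,(0:Fin N)) 1) := by
    rw [mulVec_smul]
    congr 1
    funext x; obtain ⟨d,a,b,j⟩ := x
    fin_cases d <;> fin_cases a <;> fin_cases b <;>
      simp [Cminus3, Sm, P0, P1, Matrix.one_apply, Pi.single_apply, Prod.ext_iff,
        mulVec_add, mulVec_sub, Matrix.add_apply] <;>
      (try (split_ifs <;> (try ring) <;> simp_all))
  have h6 : Cplus3 N *ᵥ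
        ((c * c) • (Pi.single ((1:Fin 2),(0:Fin 2),(0:Fin 2),(0:Fin N) - 1) (1:ℂ)
          - Pi.single (0,0,1,(0:Fin N) - 1) 1
          - Pi.single (0,1,0,(0:Fin N)) 1 + Pi.single (0,1,1,(0:Fin N)) 1))
      = (c * c) • (Pi.single (1,0,0,(0:Fin N) - 1) 1 - Pi.single (0,0,1,(0:Fin N)) 1
          - Pi.single (0,1,0,(0:Fin N)) 1 + Pi.single (0,1,1,(0:Fin N) + 1) 1) := by
    rw [mulVec_smul]
    congr 1
    funext x; obtain ⟨d,a,b,j⟩ := x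
    fin_cases d <;> fin_cases a <;> fin_cases b <;>
      simp [Cplus3, Sp, P0, P1, Matrix.one_apply, Pi.single_apply, Prod.ext_iff,
        mulVec_add, mulVec_sub, Matrix.add_apply, sub_add_cancel] <;>
      (try (split_ifs <;> (try ring) <;> simp_all))
  have hchain : Ud N *ᵥ Pi.single ((0:Fin 2),(0:Fin 2),(0:Fin 2),(0:Fin N)) (1:ℂ)
      = sandwich N Hgate *ᵥ
        ((c * c) • (Pi.single (1,0,0,(0:Fin N) - 1) 1 - Pi.single (0,0,1,(0:Fin N)) 1
          - Pi.single (0,1,0,(0:Fin N)) 1 + Pi.single (0,1,1,(0:Fin N) + 1) 1)) := by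
    rw [Ud]
    rw [← mulVec_mulVec, ← mulVec_mulVec, ← mulVec_mulVec, ← mulVec_mulVec,
      ← mulVec_mulVec, ← mulVec_mulVec]
    rw [h1, h2, h3, h4, h5, h6]
  funext i
  have hentry : Ud N ((0:Fin 2),(0:Fin 2),(0:Fin 2),i) ((0:Fin 2),(0:Fin 2),(0:Fin 2),(0:Fin N))
      = (Ud N *ᵥ Pi.single ((0:Fin 2),(0:Fin 2),(0:Fin 2),(0:Fin N)) (1:ℂ))
          ((0:Fin 2),(0:Fin 2),(0:Fin 2),i) := by
    simp [mulVec_single]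
  have h01 : ((0:Fin N) - 1) ≠ (0:Fin N) + 1 ∨ True := Or.inr trivial
  rw [hentry, hchain]
  rw [mulVec_smul]
  simp only [mulVec_add, mulVec_sub, mulVec_single_one, Pi.smul_apply, Pi.add_apply, Pi.sub_apply,
    smul_eq_mul, mul_one, Matrix.col_apply]
  have hH : ∀ j0 : Fin N, sandwich N Hgate ((0:Fin 2),(0:Fin 2),(0:Fin 2),i)
      ((1:Fin 2),(0:Fin 2),(0:Fin 2),j0) = 0 := by
    intro j0; simp [sandwich, Matrix.one_apply]
  have hH2 : ∀ (a b : Fin 2) (j0 : Fin N),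
      sandwich N Hgate ((0:Fin 2),(0:Fin 2),(0:Fin 2),i) ((0:Fin 2),a,b,j0)
        = c * c * (if i = j0 then 1 else 0) := by
    intro a b j0
    fin_cases a <;> fin_cases b <;>
      simp [sandwich, Hgate, Matrix.one_apply, hcdef] <;> (try (split_ifs <;> (try ring) <;> simp_all))
  rw [hH, hH2, hH2, hH2]
  simp only [eVec, Pi.smul_apply, Pi.add_apply, Pi.neg_apply, Pi.single_apply, smul_eq_mul]
  rw [hc]
  split_ifs <;> ring

/-- `(⟨0|⊗⟨0|⊗⟨0|⊗I) U_d (|0⟩⊗|0⟩⊗|0⟩⊗e_0) = (1/4)(−2e_0 + e_1)`. -/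
theorem ud_left_boundary_action (n : ℕ) (hn : 1 ≤ n) :
    (fun i : Fin (2 ^ n) =>
        Ud (2 ^ n) ((0 : Fin 2), (0 : Fin 2), (0 : Fin 2), i)
          ((0 : Fin 2), (0 : Fin 2), (0 : Fin 2), (0 : Fin (2 ^ n))))
      = (1 / 4 : ℂ) •
          (-(2 : ℂ) • eVec (2 ^ n) 0
            + eVec (2 ^ n)
                ⟨1, (by have := Nat.one_lt_two_pow_iff.mpr (by omega : n ≠ 0); omega)⟩) := by
  have hN : 1 < 2 ^ n := Nat.one_lt_two_pow_iff.mpr (by omega)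
  have h1 : (⟨1, (by have := Nat.one_lt_two_pow_iff.mpr (by omega : n ≠ 0); omega)⟩ :
      Fin (2 ^ n)) = (0 : Fin (2 ^ n)) + 1 := by
    rw [Fin.ext_iff]
    simp [Fin.add_def, Nat.mod_eq_of_lt hN]
  have h := ud_aux (2 ^ n) hN
  rw [← h1] at h
  exact h
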